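/- Let G be a directed Eulerian graph, let C be an Eulerian circuit of G, and let v be a node with d(v) ≥ 3 such that (u,v,w) appears in C for edges (u,v),(v,w). Then there exists an Eulerian circuit C* of G in which (u,v,w) does not appear. -/

import Mathlib

/-- The underlying undirected simple graph of a directed graph `E` (no self-loops). -/
def underlyingUG {V : Type*} (E : V → V → Prop) : SimpleGraph V where
  Adj a b := a ≠ b ∧ (E a b ∨ E b a)
  symm := ⟨fun a b h => ⟨h.1.symm, h.2.symm⟩⟩
  loopless := ⟨fun a h => h.1 rfl⟩

/-- Out-degree of `v`: number of out-neighbors. -/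
noncomputable def outdeg {V : Type*} (E : V → V → Prop) (v : V) : ℕ := Set.ncard {w | E v w}

/-- In-degree of `v`: number of in-neighbors. -/
noncomputable def indeg {V : Type*} (E : V → V → Prop) (v : V) : ℕ := Set.ncard {u | E u v}

/-- The cyclic sequence of consecutive pairs of a circuit given as a vertex list. -/
def cyclicPairs {V : Type*} (c : List V) : List (V × V) := c.zip (c.rotate 1)

/-- `c` is an Eulerian circuit: a nonempty closed walk using every edge exactly once. -/
def IsEulerianCircuit {V : Type*} (E : V → V → Prop) (c : List V) : Prop :=
  c ≠ [] ∧ (cyclicPairs c).Nodup ∧ ∀ p : V × V, p ∈ cyclicPairs c ↔ E p.1 p.2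

/-- The walk `q` appears (cyclically, as consecutive edges) in the circuit `c`. -/
def Appears {V : Type*} (q c : List V) : Prop :=
  ∃ k, (q.zip q.tail) <:+: cyclicPairs (c.rotate k)

/-- `v` is a cut node of the connected undirected graph `H`. -/
def IsCutNode {V : Type*} (H : SimpleGraph V) (v : V) : Prop :=
  ¬ (H.induce {u | u ≠ v}).Connected

/-- The underlying undirected graph with node `v` (and incident edges) removed. -/
def delNode {V : Type*} (E : V → V → Prop) (v : V) := (underlyingUG E).induce {u | u ≠ v}

open List

section Helpers

variable {V : Type*}

/-- Adjacent pairs of a (non-cyclic) list. -/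
def zipAdj (l : List V) : List (V × V) := l.zip l.tail

lemma zipAdj_cons_cons (a b : V) (l : List V) :
    zipAdj (a :: b :: l) = (a, b) :: zipAdj (b :: l) := rfl

lemma zip_append_right_eq {W : Type*} :
    ∀ (l : List V) (m : List W) (r : List V), l.length = m.length → (l ++ r).zip m = l.zip m
  | [], m, r, h => by
      rw [List.length_nil] at h; rw [List.eq_nil_of_length_eq_zero h.symm]; simp
  | a :: l, [], r, h => by simp at h
  | a :: l, b :: m, r, h => by
      simp only [length_cons, Nat.add_right_cancel_iff] at h
      simp [zip_cons_cons, zip_append_right_eq l m r h]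

lemma cyclicPairs_cons (a : V) (t : List V) :
    cyclicPairs (a :: t) = zipAdj (a :: t ++ [a]) := by
  unfold cyclicPairs zipAdj
  rw [rotate_cons_succ, rotate_zero]
  rw [show (a :: t ++ [a]).tail = t ++ [a] by simp]
  rw [show (a :: t ++ [a]) = (a :: t) ++ [a] by simp]
  rw [zip_append_right_eq _ _ _ (by simp)]

lemma zipAdj_append (X Z : List V) (y : V) :
    zipAdj (X ++ y :: Z) = zipAdj (X ++ [y]) ++ zipAdj (y :: Z) := by
  induction X with
  | nil => simp [zipAdj]
  | cons x X' ih =>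
    cases X' with
    | nil => simp [zipAdj_cons_cons, zipAdj]
    | cons x2 X'' => simp only [cons_append, zipAdj_cons_cons] at *; rw [ih]

lemma getElem_idx_congr {α : Type*} (l : List α) {i j : ℕ} (h : i = j) (hj : j < l.length) :
    l[i]'(h ▸ hj) = l[j] := by subst h; rfl

lemma length_cyclicPairs (l : List V) : (cyclicPairs l).length = l.length := by
  simp [cyclicPairs]

lemma getElem_cyclicPairs (l : List V) (i : ℕ) (hi : i < l.length)
    (hj : (i + 1) % l.length < l.length) (hi' : i < (cyclicPairs l).length) :
    (cyclicPairs l)[i] = (l[i], l[(i + 1) % l.length]) := by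
  simp only [cyclicPairs, getElem_zip, getElem_rotate]

lemma cyclicPairs_rotate (l : List V) (k : ℕ) :
    cyclicPairs (l.rotate k) = (cyclicPairs l).rotate k := by
  apply List.ext_getElem
  · simp [length_cyclicPairs]
  · intro i h1 h2
    have hcl : i < l.length := by simpa [length_cyclicPairs] using h1
    have hne : 0 < l.length := by omega
    have hmod : ∀ j : ℕ, j % l.length < l.length := fun j => Nat.mod_lt _ hne
    rw [getElem_rotate]
    rw [getElem_cyclicPairs (l.rotate k) i (by simpa) (by simpa using hmod _) h1]
    simp only [length_cyclicPairs]
    rw [getElem_cyclicPairs l ((i + k) % l.length) (hmod _) (hmod _)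
      (by rw [length_cyclicPairs]; exact hmod _)]
    simp only [length_rotate, getElem_rotate]
    have : ((i + 1) % l.length + k) % l.length = ((i + k) % l.length + 1) % l.length := by
      rw [Nat.mod_add_mod, Nat.mod_add_mod, Nat.add_right_comm]
    simp [this]

lemma rotate_eulerian {E : V → V → Prop} {l : List V} (h : IsEulerianCircuit E l) (k : ℕ) :
    IsEulerianCircuit E (l.rotate k) := by
  obtain ⟨hne, hnd, hmem⟩ := h
  refine ⟨by simpa using hne, ?_, ?_⟩
  · rw [cyclicPairs_rotate]
    exact ((rotate_perm _ _).nodup_iff).2 hnd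
  · intro p
    rw [cyclicPairs_rotate, (rotate_perm _ _).mem_iff]
    exact hmem p

lemma count_fst_cyclicPairs [DecidableEq V] (l : List V) (v : V) :
    count v l = countP (fun p => p.1 == v) (cyclicPairs l) := by
  have hmap : (cyclicPairs l).map Prod.fst = l := by
    unfold cyclicPairs
    exact map_fst_zip (by simp)
  conv_lhs => rw [← hmap]
  rw [count_eq_countP, countP_map]
  rfl

lemma outdeg_le_count [DecidableEq V] (E : V → V → Prop) (l : List V) (v : V)
    (hmem : ∀ p : V × V, p ∈ cyclicPairs l ↔ E p.1 p.2) :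
    Set.ncard {x | E v x} ≤ count v l := by
  classical
  rw [count_fst_cyclicPairs]
  set M := cyclicPairs l
  set F := ((M.filter (fun p => p.1 == v)).map Prod.snd).toFinset with hF
  have hsub : {x | E v x} ⊆ ↑F := by
    intro x hx
    simp only [hF, coe_toFinset, Set.mem_setOf_eq, List.mem_map, List.mem_filter]
    exact ⟨(v, x), ⟨(hmem (v, x)).2 hx, by simp⟩, rfl⟩
  calc Set.ncard {x | E v x} ≤ Set.ncard (↑F : Set V) :=
        Set.ncard_le_ncard hsub (F.finite_toSet)
    _ = F.card := Set.ncard_coe_finset F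
    _ ≤ ((M.filter (fun p => p.1 == v)).map Prod.snd).length := toFinset_card_le _
    _ = (M.filter (fun p => p.1 == v)).length := by rw [length_map]
    _ = countP (fun p => p.1 == v) M := countP_eq_length_filter.symm

lemma two_count_split [DecidableEq V] (v : V) :
    ∀ t : List V, 2 ≤ count v t → ∃ A B C, t = A ++ v :: B ++ v :: C := by
  intro t ht
  induction t with
  | nil => simp at ht
  | cons x r ih =>
    by_cases hx : x = v
    · subst hx
      have : 1 ≤ count x r := by rw [count_cons_self] at ht; omega
      obtain ⟨B, C, hBC⟩ := append_of_mem (count_pos_iff.mp this)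
      exact ⟨[], B, C, by simp [hBC]⟩
    · have : 2 ≤ count v r := by rwa [count_cons_of_ne hx] at ht
      obtain ⟨A, B, C, h⟩ := ih this
      exact ⟨x :: A, B, C, by simp [h]⟩

lemma cyclicPairs_three (v : V) (A B C : List V) :
    cyclicPairs (v :: (A ++ v :: B ++ v :: C)) =
      zipAdj (v :: A ++ [v]) ++ zipAdj (v :: B ++ [v]) ++ zipAdj (v :: C ++ [v]) := by
  rw [cyclicPairs_cons]
  have h1 := zipAdj_append (v :: A) (B ++ v :: (C ++ [v])) v
  have h2 := zipAdj_append (v :: B) (C ++ [v]) v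
  simp only [cons_append, append_assoc, cons_append] at h1 h2 ⊢
  rw [h1, h2]

lemma cyclicPairs_swap_perm (v : V) (A B C : List V) :
    cyclicPairs (v :: (B ++ v :: A ++ v :: C)) ~ cyclicPairs (v :: (A ++ v :: B ++ v :: C)) := by
  rw [cyclicPairs_three, cyclicPairs_three]
  exact (perm_append_comm.append_right _)

end Helpers

set_option maxHeartbeats 1000000 in
/-- If `d(v) ≥ 3` and `(u,v,w)` appears in the Eulerian circuit `C`, then some
Eulerian circuit `C*` avoids `(u,v,w)`. -/
theorem high_degree_not_safe {V : Type*} [Fintype V] (E : V → V → Prop)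
    (hloop : ∀ x : V, ¬ E x x) (hconn : (underlyingUG E).Connected)
    (c : List V) (hc : IsEulerianCircuit E c)
    (u v w : V) (huv : E u v) (hvw : E v w) (hd : 3 ≤ outdeg E v)
    (happ : Appears [u, v, w] c) :
    ∃ cstar : List V, IsEulerianCircuit E cstar ∧ ¬ Appears [u, v, w] cstar := by
  classical
  obtain ⟨k, hinf⟩ := happ
  have hq : ([u, v, w].zip [u, v, w].tail) = [(u, v), (v, w)] := rfl
  rw [hq] at hinf
  -- Step 1: rotate so that the bad transition sits at positions (n-1, 0)
  obtain ⟨P, Q, hPQ⟩ := hinf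
  set c1 := c.rotate k with hc1def
  have hc1 : IsEulerianCircuit E c1 := rotate_eulerian hc k
  obtain ⟨h1ne, h1nd, h1mem⟩ := hc1
  set n := c1.length with hndef
  have hnM : (cyclicPairs c1).length = n := length_cyclicPairs c1
  have hlen : n = P.length + 2 + Q.length := by
    rw [← hnM, ← hPQ]; simp; omega
  have hn2 : 2 ≤ n := by omega
  have hib : P.length < (cyclicPairs c1).length := by omega
  have hib1 : P.length + 1 < (cyclicPairs c1).length := by omega
  have hPQ' : P ++ ([(u, v), (v, w)] ++ Q) = cyclicPairs c1 := by
    rw [← append_assoc]; exact hPQ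
  have hiv : (cyclicPairs c1)[P.length]'hib = (u, v) := by
    rw [getElem_of_eq hPQ'.symm]
    rw [getElem_append_right (le_refl P.length)]
    simp
  have hiw : (cyclicPairs c1)[P.length + 1]'hib1 = (v, w) := by
    rw [getElem_of_eq hPQ'.symm]
    rw [getElem_append_right (by omega : P.length ≤ P.length + 1)]
    simp
  set c2 := c1.rotate (P.length + 1) with hc2def
  have hc2 : IsEulerianCircuit E c2 := rotate_eulerian ⟨h1ne, h1nd, h1mem⟩ _
  obtain ⟨h2ne, h2nd, h2mem⟩ := hc2
  have hN : cyclicPairs c2 = (cyclicPairs c1).rotate (P.length + 1) := cyclicPairs_rotate _ _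
  have hlc2 : c2.length = n := by simp [hc2def, hndef]
  have hlN : (cyclicPairs c2).length = n := by rw [length_cyclicPairs, hlc2]
  have hN0 : (cyclicPairs c2)[0]'(by omega) = (v, w) := by
    rw [getElem_of_eq hN, getElem_rotate]
    simp only [hnM]
    rw [getElem_idx_congr _ (by rw [Nat.zero_add, Nat.mod_eq_of_lt (show P.length + 1 < n by omega)]) hib1]
    exact hiw
  have hNlast : (cyclicPairs c2)[n - 1]'(by omega) = (u, v) := by
    rw [getElem_of_eq hN, getElem_rotate]
    simp only [hnM]
    rw [getElem_idx_congr _ (show (n - 1 + (P.length + 1)) % n = P.length by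
      rw [show n - 1 + (P.length + 1) = n + P.length by omega, Nat.add_mod_left,
        Nat.mod_eq_of_lt (by omega)]) hib]
    exact hiv
  -- Vertex facts about c2
  have hmodn : ∀ j : ℕ, j % c2.length < c2.length := fun j => Nat.mod_lt _ (by omega)
  have hcp0 := getElem_cyclicPairs c2 0 (by omega) (hmodn 1) (by omega)
  rw [hN0] at hcp0
  rw [Prod.ext_iff] at hcp0
  have h20 : c2[0]'(by omega) = v := hcp0.1.symm
  have h21 : c2[1]'(by omega) = w := by
    have := hcp0.2.symm
    rwa [getElem_idx_congr c2 (show (0 + 1) % c2.length = 1 by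
      rw [Nat.zero_add, hlc2]; exact Nat.mod_eq_of_lt (by omega)) (by omega)] at this
  have hcpl := getElem_cyclicPairs c2 (n - 1) (by omega) (hmodn _) (by omega)
  rw [hNlast, Prod.ext_iff] at hcpl
  have h2last : c2[n - 1]'(by omega) = u := hcpl.1.symm
  -- v occurs at least 3 times in c2
  have hcount : 3 ≤ count v c2 :=
    le_trans hd (outdeg_le_count E c2 v h2mem)
  -- decompose c2
  obtain ⟨x, t, hxt⟩ : ∃ x t, c2 = x :: t := by
    cases hc2eq : c2 with
    | nil => exact absurd hc2eq h2ne
    | cons x t => exact ⟨x, t, rfl⟩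
  have hxv : x = v := by
    have := h20
    rw [getElem_of_eq hxt] at this
    simpa using this
  rw [hxv] at hxt
  clear hxv
  have hcountt : 2 ≤ count v t := by
    rw [hxt, count_cons_self] at hcount; omega
  obtain ⟨A, B, C, hABC⟩ := two_count_split v t hcountt
  rw [hABC] at hxt
  -- None of A, B, C is empty (else a self-loop at v)
  have hblocks : cyclicPairs c2 =
      zipAdj (v :: A ++ [v]) ++ zipAdj (v :: B ++ [v]) ++ zipAdj (v :: C ++ [v]) := by
    rw [hxt]; exact cyclicPairs_three v A B C
  have hvvnot : (v, v) ∉ cyclicPairs c2 := fun hmem' => hloop v ((h2mem (v, v)).1 hmem')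
  have hAne : A ≠ [] := by
    intro h; subst h
    exact hvvnot (by rw [hblocks]; simp [zipAdj])
  have hBne : B ≠ [] := by
    intro h; subst h
    exact hvvnot (by rw [hblocks]; simp [zipAdj])
  have hCne : C ≠ [] := by
    intro h; subst h
    exact hvvnot (by rw [hblocks]; simp [zipAdj])
  -- destructure the blocks
  obtain ⟨a, A', hA'⟩ : ∃ a A', A = a :: A' := by
    cases A with
    | nil => exact absurd rfl hAne
    | cons a A' => exact ⟨a, A', rfl⟩
  obtain ⟨b, B', hB'⟩ : ∃ b B', B = b :: B' := by
    cases B with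
    | nil => exact absurd rfl hBne
    | cons b B' => exact ⟨b, B', rfl⟩
  obtain ⟨C', z, hC⟩ : ∃ C' z, C = C' ++ [z] := by
    rcases C.eq_nil_or_concat with h | ⟨C', z, h⟩
    · exact absurd h hCne
    · exact ⟨C', z, by simpa using h⟩
  have haw : a = w := by
    have h1a : c2[1]'(by omega) = a := by
      rw [getElem_of_eq (show c2 = v :: a :: (A' ++ v :: B ++ v :: C) by rw [hxt, hA']; simp)]
      simp
    exact h1a.symm.trans h21
  rw [haw] at hA'
  -- last element of c2 is u
  have hY : c2 = (v :: A ++ v :: B ++ v :: C') ++ [z] := by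
    rw [hxt, hC]; simp
  have hYlen : (v :: A ++ v :: B ++ v :: C').length + 1 = n := by
    rw [← hlc2, hY]; simp; omega
  have hzu : z = u := by
    have := h2last
    rw [getElem_of_eq hY] at this
    rw [getElem_idx_congr _ (show n - 1 = (v :: A ++ v :: B ++ v :: C').length by omega)
      (by simp)] at this
    have hz := getElem_concat_length (l := v :: A ++ v :: B ++ v :: C') (a := z) rfl (by simp)
    exact hz.symm.trans this
  rw [hzu] at hC
  -- the swapped circuit
  set cst := v :: (B ++ v :: A ++ v :: C) with hcstdef
  have hperm : cyclicPairs cst ~ cyclicPairs c2 := by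
    rw [hxt, hcstdef]; exact cyclicPairs_swap_perm v A B C
  have hstnd : (cyclicPairs cst).Nodup := (hperm.nodup_iff).2 h2nd
  have hstmem : ∀ p : V × V, p ∈ cyclicPairs cst ↔ E p.1 p.2 := fun p => by
    rw [hperm.mem_iff]; exact h2mem p
  set m := cst.length with hmdef
  have hm2 : 2 ≤ m := by rw [hmdef, hcstdef, hB']; simp
  have hlL : (cyclicPairs cst).length = m := length_cyclicPairs cst
  have hst0 : cst[0]'(by omega) = v := by rw [getElem_of_eq hcstdef]; rfl
  have hst1 : cst[1]'(by omega) = b := by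
    rw [getElem_of_eq (show cst = v :: b :: (B' ++ v :: A ++ v :: C) by
      rw [hcstdef, hB']; simp)]
    simp
  have hstY : cst = (v :: B ++ v :: A ++ v :: C') ++ [u] := by
    rw [hcstdef, hC]; simp
  have hstYlen : (v :: B ++ v :: A ++ v :: C').length + 1 = m := by
    rw [hmdef, hstY]; simp; omega
  have hstlast : cst[m - 1]'(by omega) = u := by
    rw [getElem_of_eq hstY]
    rw [getElem_idx_congr _ (show m - 1 = (v :: B ++ v :: A ++ v :: C').length by omega)
      (by simp)]
    exact getElem_concat_length (l := v :: B ++ v :: A ++ v :: C') (a := u) rfl (by simp)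
  have hmodm : ∀ j : ℕ, j % cst.length < cst.length := fun j => Nat.mod_lt _ (by omega)
  have hLlast : (cyclicPairs cst)[m - 1]'(by omega) = (u, v) := by
    rw [getElem_cyclicPairs cst (m - 1) (by omega) (hmodm _) (by omega)]
    rw [getElem_idx_congr _ (show (m - 1 + 1) % cst.length = 0 by
      rw [show m - 1 + 1 = m by omega, hmdef, Nat.mod_self]) (by omega)]
    rw [hstlast, hst0]
  have hL0 : (cyclicPairs cst)[0]'(by omega) = (v, b) := by
    rw [getElem_cyclicPairs cst 0 (by omega) (hmodm _) (by omega)]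
    rw [getElem_idx_congr _ (show (0 + 1) % cst.length = 1 by
      rw [Nat.zero_add, ← hmdef, Nat.mod_eq_of_lt (by omega)]) (by omega)]
    rw [hst0, hst1]
  -- b ≠ w
  have hblk : cyclicPairs cst =
      zipAdj (v :: B ++ [v]) ++ zipAdj (v :: A ++ [v]) ++ zipAdj (v :: C ++ [v]) := by
    rw [hcstdef]; exact cyclicPairs_three v B A C
  have hbw : b ≠ w := by
    intro hbweq
    have hmem1 : (v, w) ∈ zipAdj (v :: B ++ [v]) := by
      rw [hB', hbweq]
      rw [show v :: (w :: B') ++ [v] = v :: w :: (B' ++ [v]) by simp, zipAdj_cons_cons]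
      exact mem_cons_self
    have hmem2 : (v, w) ∈ zipAdj (v :: A ++ [v]) := by
      rw [hA']
      rw [show v :: (w :: A') ++ [v] = v :: w :: (A' ++ [v]) by simp, zipAdj_cons_cons]
      exact mem_cons_self
    have hnd' := hstnd
    rw [hblk, append_assoc, nodup_append] at hnd'
    exact hnd'.2.2 _ hmem1 _ (mem_append_left _ hmem2) rfl
  -- conclude
  refine ⟨cst, ⟨by rw [hcstdef]; simp, hstnd, hstmem⟩, ?_⟩
  rintro ⟨k', hinf'⟩
  rw [hq, cyclicPairs_rotate] at hinf'
  obtain ⟨P', Q', hPQ2⟩ := hinf'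
  have hPQ2' : P' ++ ([(u, v), (v, w)] ++ Q') = (cyclicPairs cst).rotate k' := by
    rw [← append_assoc]; exact hPQ2
  have hlrot : ((cyclicPairs cst).rotate k').length = m := by rw [length_rotate, hlL]
  have hmP : m = P'.length + 2 + Q'.length := by
    rw [← hlrot, ← hPQ2]; simp; omega
  have hjb : P'.length < ((cyclicPairs cst).rotate k').length := by omega
  have hjb1 : P'.length + 1 < ((cyclicPairs cst).rotate k').length := by omega
  have hjv : ((cyclicPairs cst).rotate k')[P'.length]'hjb = (u, v) := by
    rw [getElem_of_eq hPQ2'.symm]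
    rw [getElem_append_right (le_refl P'.length)]
    simp
  have hjw : ((cyclicPairs cst).rotate k')[P'.length + 1]'hjb1 = (v, w) := by
    rw [getElem_of_eq hPQ2'.symm]
    rw [getElem_append_right (by omega : P'.length ≤ P'.length + 1)]
    simp
  rw [getElem_rotate] at hjv hjw
  have hidx : (P'.length + k') % (cyclicPairs cst).length = m - 1 := by
    have hboth : (cyclicPairs cst)[(P'.length + k') % (cyclicPairs cst).length]'(by
        rw [hlL]; exact Nat.mod_lt _ (by omega)) =
        (cyclicPairs cst)[m - 1]'(by omega) := by rw [hjv, hLlast]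
    exact (List.Nodup.getElem_inj_iff hstnd).mp hboth
  have hidx2 : (P'.length + 1 + k') % (cyclicPairs cst).length = 0 := by
    rw [show P'.length + 1 + k' = P'.length + k' + 1 by omega]
    rw [← Nat.mod_add_mod, hidx]
    rw [show m - 1 + 1 = m by omega, hlL, Nat.mod_self]
  rw [getElem_idx_congr _ hidx2 (by omega)] at hjw
  have hfin : ((v, b) : V × V) = (v, w) := hL0.symm.trans hjw
  exact hbw (congrArg Prod.snd hfin)
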